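/- If Ψ is a submodular partition function on a finite set E, then for every real k, the set P_k of partitions μ with Ψ(μ) ≤ k is pushing. -/
import Mathlib


open Set

variable {E : Type*}

/-- A partition of `E`: pairwise disjoint nonempty parts covering `E`. -/
def IsPartitionOf (μ : Set (Set E)) : Prop :=
  (∀ A ∈ μ, A.Nonempty) ∧ μ.PairwiseDisjoint id ∧ ⋃₀ μ = Set.univ

/-- The least superset of `P` closed under merging of partitions:
from `(α|A)` and `(Aᶜ|β)` one obtains `(α|β)`. -/
inductive MergeClosure (P : Set (Set (Set E))) : Set (Set E) → Prop
  | base {μ : Set (Set E)} : μ ∈ P → MergeClosure P μ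
  | merge {α β : Set (Set E)} {A : Set E} (hA : A ∉ α) (hB : Aᶜ ∉ β) :
      MergeClosure P (insert A α) → MergeClosure P (insert Aᶜ β) →
      MergeClosure P (α ∪ β)

/-- A `Q`-bramble: pairwise intersecting sets meeting every partition in `Q`. -/
def IsBramble (Q : Set (Set (Set E))) (Br : Set (Set E)) : Prop :=
  (∀ X ∈ Br, ∀ Y ∈ Br, (X ∩ Y).Nonempty) ∧ ∀ μ ∈ Q, ∃ X ∈ μ, X ∈ Br

/-- Deletion: remove one element from one member, dropping it if it becomes empty. -/
def DelStep (β α : Set (Set E)) : Prop :=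
  ∃ B ∈ β, ∃ b ∈ B, α = (β \ {B}) ∪ {X | X = B \ {b} ∧ X.Nonempty}

/-- Partition step: replace one member by a partition of it. -/
def SplitStep (β α : Set (Set E)) : Prop :=
  ∃ B ∈ β, ∃ δ : Set (Set E), (∀ D ∈ δ, D.Nonempty) ∧ δ.PairwiseDisjoint id ∧
    ⋃₀ δ = B ∧ α = (β \ {B}) ∪ δ

/-- `α` is finer than `β`: obtained by a sequence of deletions and partitions. -/
def Finer (α β : Set (Set E)) : Prop :=
  Relation.ReflTransGen (fun x y => DelStep x y ∨ SplitStep x y) β α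

/-- `α` is strongly finer than `β`: obtained by deletions only. -/
def StronglyFiner (α β : Set (Set E)) : Prop :=
  Relation.ReflTransGen DelStep β α

/-- A family of small sets: downward closed. -/
def DownClosed (S : Set (Set E)) : Prop := ∀ X ∈ S, ∀ Y, Y ⊆ X → Y ∈ S

def Refining (Q : Set (Set (Set E))) : Prop :=
  ∀ (α β : Set (Set E)) (A B : Set E), A ∉ α → B ∉ β →
    insert A α ∈ Q → insert B β ∈ Q → A ∩ B = ∅ →
    ∃ μ ∈ Q, Finer μ (α ∪ β)

def Dualising (Q : Set (Set (Set E))) : Prop :=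
  ∀ S : Set (Set E), DownClosed S →
    (∃ μ ∈ Q, ∀ X ∈ μ, X ∈ S) ∨ (∃ Br, IsBramble Q Br ∧ ∀ X ∈ Br, X ∉ S)

/-- `α∖F`: remove the elements of `F` from every part, discarding emptied parts. -/
def RemoveF (α : Set (Set E)) (F : Set E) : Set (Set E) :=
  {X | ∃ A ∈ α, X = A \ F ∧ X.Nonempty}

def Pushing (P : Set (Set (Set E))) : Prop :=
  ∀ (α β : Set (Set E)) (A B : Set E), A ∉ α → B ∉ β →
    insert A α ∈ P → insert B β ∈ P → (Aᶜ ∩ Bᶜ).Nonempty →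
    ∃ F : Set E, F.Nonempty ∧ F ⊆ Aᶜ ∩ Bᶜ ∧
      (insert (A ∪ F) (RemoveF α F) ∈ P ∨ insert (B ∪ F) (RemoveF β F) ∈ P)

/-- Weakly submodular partition function (new sense). -/
def WeaklySubmodular (Ψ : Set (Set E) → EReal) : Prop :=
  ∀ (α β : Set (Set E)) (A B : Set E), A ∉ α → B ∉ β →
    IsPartitionOf (insert A α) → IsPartitionOf (insert B β) →
    (Aᶜ ∩ Bᶜ).Nonempty →
    ∃ F : Set E, F.Nonempty ∧ F ⊆ Aᶜ ∩ Bᶜ ∧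
      (Ψ (insert (A ∪ F) (RemoveF α F)) ≤ Ψ (insert A α) ∨
       Ψ (insert (B ∪ F) (RemoveF β F)) ≤ Ψ (insert B β))

/-- Submodular partition function. -/
def SubmodularPF (Ψ : Set (Set E) → EReal) : Prop :=
  ∀ (α β : Set (Set E)) (A B : Set E), A ∉ α → B ∉ β →
    IsPartitionOf (insert A α) → IsPartitionOf (insert B β) →
    Ψ (insert (A ∪ Bᶜ) (RemoveF α Bᶜ)) + Ψ (insert (B ∪ Aᶜ) (RemoveF β Aᶜ))
      ≤ Ψ (insert A α) + Ψ (insert B β)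

/-- The overlap: elements belonging to at least two members. -/
def Overlap (α : Set (Set E)) : Set E :=
  {x | ∃ X ∈ α, ∃ Y ∈ α, X ≠ Y ∧ x ∈ X ∧ x ∈ Y}

/-- A connectivity function: symmetric and submodular. -/
def ConnFn (f : Set E → EReal) : Prop :=
  (∀ X, f X = f Xᶜ) ∧ ∀ X Y, f (X ∪ Y) + f (X ∩ Y) ≤ f X + f Y

/-- The partition function `max_f`. -/
noncomputable def maxPF (f : Set E → EReal) (μ : Set (Set E)) : EReal := sSup (f '' μ)

lemma parts_subset_compl {A : Set E} {α : Set (Set E)} (hA : A ∉ α)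
    (hp : IsPartitionOf (insert A α)) : ∀ X ∈ α, X ⊆ Aᶜ := by
  intro X hX
  have hd := hp.2.1 (Set.mem_insert A α) (Set.mem_insert_of_mem A hX)
    (by rintro rfl; exact hA hX)
  exact Set.subset_compl_iff_disjoint_left.mpr hd

lemma partition_push {A F : Set E} {α : Set (Set E)} (hA : A ∉ α)
    (hp : IsPartitionOf (insert A α)) :
    IsPartitionOf (insert (A ∪ F) (RemoveF α F)) := by
  obtain ⟨hne, hdisj, hcov⟩ := hp
  have hsub := parts_subset_compl hA ⟨hne, hdisj, hcov⟩
  refine ⟨?_, ?_, ?_⟩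
  · rintro X (rfl | ⟨Y, hY, rfl, hYne⟩)
    · exact (hne A (Set.mem_insert A α)).mono Set.subset_union_left
    · exact hYne
  · rintro X (rfl | ⟨Y, hY, rfl, hYne⟩) Z (rfl | ⟨W, hW, rfl, hWne⟩) hXZ
    · exact absurd rfl hXZ
    · refine Set.disjoint_left.mpr ?_
      rintro x (hx | hx) ⟨hxW, hxF⟩
      · exact hsub W hW hxW hx
      · exact hxF hx
    · refine Set.disjoint_left.mpr ?_
      rintro x ⟨hxY, hxF⟩ (hx | hx)
      · exact hsub Y hY hxY hx
      · exact hxF hx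
    · have hYW : Y ≠ W := by rintro rfl; exact hXZ rfl
      have := hdisj (Set.mem_insert_of_mem A hY) (Set.mem_insert_of_mem A hW) hYW
      exact Set.disjoint_left.mpr fun x hx hx' =>
        (Set.disjoint_left.mp this hx.1 hx'.1)
  · apply Set.eq_univ_of_forall
    intro x
    by_cases hxAF : x ∈ A ∪ F
    · exact ⟨A ∪ F, Set.mem_insert _ _, hxAF⟩
    · have hx : x ∈ ⋃₀ insert A α := hcov ▸ Set.mem_univ x
      obtain ⟨X, hX, hxX⟩ := hx
      rcases hX with rfl | hX
      · exact absurd (Or.inl hxX) hxAF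
      · refine ⟨X \ F, Or.inr ⟨X, hX, rfl, ⟨x, hxX, fun h => hxAF (Or.inr h)⟩⟩,
          hxX, fun h => hxAF (Or.inr h)⟩

lemma push_rewrite {A B : Set E} {α : Set (Set E)} (hA : A ∉ α)
    (hp : IsPartitionOf (insert A α)) :
    insert (A ∪ Bᶜ) (RemoveF α Bᶜ) = insert (A ∪ (Aᶜ ∩ Bᶜ)) (RemoveF α (Aᶜ ∩ Bᶜ)) := by
  have hsub := parts_subset_compl hA hp
  have h1 : A ∪ Bᶜ = A ∪ (Aᶜ ∩ Bᶜ) := by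
    ext x; by_cases hx : x ∈ A <;> simp [hx]
  have h2 : RemoveF α Bᶜ = RemoveF α (Aᶜ ∩ Bᶜ) := by
    unfold RemoveF
    ext X
    constructor
    · rintro ⟨Y, hY, rfl, hne⟩
      have : Y \ Bᶜ = Y \ (Aᶜ ∩ Bᶜ) := by
        ext x; simp only [Set.mem_diff, Set.mem_inter_iff, Set.mem_compl_iff]
        have := @hsub Y hY
        constructor
        · rintro ⟨h, h'⟩; exact ⟨h, fun hh => h' hh.2⟩
        · rintro ⟨h, h'⟩; exact ⟨h, fun hh => h' ⟨this h, hh⟩⟩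
      exact ⟨Y, hY, this, this ▸ hne⟩
    · rintro ⟨Y, hY, rfl, hne⟩
      have : Y \ Bᶜ = Y \ (Aᶜ ∩ Bᶜ) := by
        ext x; simp only [Set.mem_diff, Set.mem_inter_iff, Set.mem_compl_iff]
        have := @hsub Y hY
        constructor
        · rintro ⟨h, h'⟩; exact ⟨h, fun hh => h' hh.2⟩
        · rintro ⟨h, h'⟩; exact ⟨h, fun hh => h' ⟨this h, hh⟩⟩
      exact ⟨Y, hY, this.symm, this ▸ hne⟩
  rw [h1, h2]

/-- if `Ψ` is a submodular partition function then for every real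
`k` the set `P_k` of partitions of value at most `k` is pushing. -/
theorem submodular_pushing [Finite E]
    (Ψ : Set (Set E) → EReal) (hΨ : SubmodularPF Ψ) (k : ℝ) :
    Pushing {μ | IsPartitionOf μ ∧ Ψ μ ≤ (k : EReal)} := by
  rintro α β A B hA hB ⟨hpα, hΨα⟩ ⟨hpβ, hΨβ⟩ hne
  refine ⟨Aᶜ ∩ Bᶜ, hne, Set.Subset.rfl, ?_⟩
  have key := hΨ α β A B hA hB hpα hpβ
  rw [push_rewrite hA hpα] at key
  rw [Set.inter_comm] at key
  rw [push_rewrite hB hpβ] at key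
  rw [Set.inter_comm] at key
  have hsum : Ψ (insert (A ∪ (Aᶜ ∩ Bᶜ)) (RemoveF α (Aᶜ ∩ Bᶜ))) +
      Ψ (insert (B ∪ (Aᶜ ∩ Bᶜ)) (RemoveF β (Aᶜ ∩ Bᶜ))) ≤ (k : EReal) + (k : EReal) :=
    key.trans (add_le_add hΨα hΨβ)
  have hor : Ψ (insert (A ∪ (Aᶜ ∩ Bᶜ)) (RemoveF α (Aᶜ ∩ Bᶜ))) ≤ (k : EReal) ∨
      Ψ (insert (B ∪ (Aᶜ ∩ Bᶜ)) (RemoveF β (Aᶜ ∩ Bᶜ))) ≤ (k : EReal) := by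
    by_contra h
    push_neg at h
    exact absurd hsum (not_le.mpr (EReal.add_lt_add h.1 h.2))
  rcases hor with h | h
  · exact Or.inl ⟨partition_push hA hpα, h⟩
  · exact Or.inr ⟨partition_push hB hpβ, h⟩
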